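/- Let P(s) = \sum_{k=1}^m a_k k^{-s} be a Dirichlet polynomial with zeros contained in \Re(s) \le r, and let s with \Re(s) > r. Using the Hadamard factorization P(z) = z^q e^{a + bz} \prod_{\rho}(1 - z/\rho)e^{z/\rho} (with \sum_\rho |\rho|^{-2} < \infty), there exists a constant C > 0 such that |P(r + it)/P(r + \epsilon + it)| \le C for all t \in \mathbb{R} and all sufficiently small \epsilon > 0 (with r + it not a zero of P, interpreting the quotient by continuity). -/

import Mathlib

section DPauxHelpers

open Metric Set Function intervalIntegral

/-- Norm of a multiset product. -/
lemma DPaux.norm_msprod (Z : Multiset ℂ) (f : ℂ → ℂ) :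
    ‖(Z.map f).prod‖ = (Z.map (fun ρ => ‖f ρ‖)).prod := by
  induction Z using Multiset.induction with
  | empty => simp
  | cons a s ih => simp [norm_mul, ih]

lemma DPaux.msprod_nonneg (Z : Multiset ℂ) (f : ℂ → ℝ) (h : ∀ x ∈ Z, 0 ≤ f x) :
    0 ≤ (Z.map f).prod := by
  induction Z using Multiset.induction with
  | empty => simp
  | cons a s ih =>
    simp only [Multiset.map_cons, Multiset.prod_cons]
    exact mul_nonneg (h a (Multiset.mem_cons_self a s))
      (ih fun x hx => h x (Multiset.mem_cons_of_mem hx))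

lemma DPaux.one_le_msprod (Z : Multiset ℂ) (f : ℂ → ℝ) (h : ∀ x ∈ Z, 1 ≤ f x) :
    1 ≤ (Z.map f).prod := by
  induction Z using Multiset.induction with
  | empty => simp
  | cons a s ih =>
    simp only [Multiset.map_cons, Multiset.prod_cons]
    have h1 := h a (Multiset.mem_cons_self a s)
    have h2 := ih fun x hx => h x (Multiset.mem_cons_of_mem hx)
    nlinarith
  
lemma DPaux.msprod_le_pow (Z : Multiset ℂ) (f : ℂ → ℝ) (C : ℝ) (hC : 0 ≤ C)
    (h0 : ∀ x ∈ Z, 0 ≤ f x) (h : ∀ x ∈ Z, f x ≤ C) :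
    (Z.map f).prod ≤ C ^ Multiset.card Z := by
  induction Z using Multiset.induction with
  | empty => simp
  | cons a s ih =>
    simp only [Multiset.map_cons, Multiset.prod_cons, Multiset.card_cons]
    rw [pow_succ, mul_comm (C ^ Multiset.card s) C]
    exact mul_le_mul (h a (Multiset.mem_cons_self a s))
      (ih (fun x hx => h0 x (Multiset.mem_cons_of_mem hx))
        (fun x hx => h x (Multiset.mem_cons_of_mem hx)))
      (DPaux.msprod_nonneg s f fun x hx => h0 x (Multiset.mem_cons_of_mem hx))
      hC

lemma DPaux.msprod_mono (Z : Multiset ℂ) (f g : ℂ → ℝ) (h0 : ∀ x ∈ Z, 0 ≤ f x)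
    (h : ∀ x ∈ Z, f x ≤ g x) : (Z.map f).prod ≤ (Z.map g).prod := by
  induction Z using Multiset.induction with
  | empty => simp
  | cons a s ih =>
    simp only [Multiset.map_cons, Multiset.prod_cons]
    exact mul_le_mul (h a (Multiset.mem_cons_self a s))
      (ih (fun x hx => h0 x (Multiset.mem_cons_of_mem hx))
        (fun x hx => h x (Multiset.mem_cons_of_mem hx)))
      (DPaux.msprod_nonneg s f fun x hx => h0 x (Multiset.mem_cons_of_mem hx))
      ((h0 a (Multiset.mem_cons_self a s)).trans (h a (Multiset.mem_cons_self a s)))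

/-- Maximum modulus principle on a closed ball, for entire functions. -/
lemma DPaux.maxmod {f : ℂ → ℂ} (hf : Differentiable ℂ f) (c : ℂ) {R : ℝ} (hR : 0 < R)
    {C : ℝ} (hC : ∀ z ∈ sphere c R, ‖f z‖ ≤ C) : ∀ z ∈ closedBall c R, ‖f z‖ ≤ C := by
  intro z hz
  refine Complex.norm_le_of_forall_mem_frontier_norm_le (isBounded_ball (x := c) (r := R))
    hf.diffContOnCl ?_ ?_
  · rw [frontier_ball c hR.ne']; exact hC
  · rw [closure_ball c hR.ne']; exact hz

/-- Factor out all zeros of an entire function in a closed ball, with a Jensen-type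
bound on the number of zeros. -/
lemma DPaux.factor_zeros (c : ℂ) (R₁ : ℝ) (hR : 1 ≤ R₁) :
    ∀ (n : ℕ) (g : ℂ → ℂ) (β : ℝ), Differentiable ℂ g → 0 ≤ β → β < ‖g c‖ →
    (∀ z ∈ sphere c (3 * R₁), ‖g z‖ ≤ 2 ^ n * β) →
    ∃ (Z : Multiset ℂ) (h : ℂ → ℂ), Differentiable ℂ h ∧ Multiset.card Z ≤ n ∧
      (∀ ρ ∈ Z, ρ ∈ closedBall c R₁ ∧ g ρ = 0) ∧
      (∀ z ∈ closedBall c R₁, h z ≠ 0) ∧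
      (∀ z, g z = (Z.map (fun ρ => z - ρ)).prod * h z) := by
  have hR0 : (0:ℝ) < R₁ := lt_of_lt_of_le one_pos hR
  have hR3 : (0:ℝ) < 3 * R₁ := by linarith
  intro n
  induction n with
  | zero =>
    intro g β hg hβ0 hβ hsph
    exfalso
    have := DPaux.maxmod hg c hR3 (C := 2 ^ 0 * β) hsph c (mem_closedBall_self hR3.le)
    simp only [pow_zero, one_mul] at this
    linarith
  | succ n ih =>
    intro g β hg hβ0 hβ hsph
    by_cases hex : ∃ ρ ∈ closedBall c R₁, g ρ = 0
    · obtain ⟨ρ₀, hρ₀c, hgρ₀⟩ := hex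
      set h₀ : ℂ → ℂ := dslope g ρ₀ with hh₀
      have hfac : ∀ z, g z = (z - ρ₀) * h₀ z := by
        intro z
        have := sub_smul_dslope g ρ₀ z
        rw [hgρ₀, sub_zero] at this
        simpa [smul_eq_mul] using this.symm
      have hd₀ : Differentiable ℂ h₀ := by
        intro z
        rcases eq_or_ne z ρ₀ with rfl | hz
        · obtain ⟨p, hp⟩ := (hg.analyticAt z)
          exact hp.has_fpower_series_dslope_fslope.analyticAt.differentiableAt
        · exact (differentiableAt_dslope_of_ne hz).mpr (hg _)
      have hgc : g c ≠ 0 := by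
        intro h; rw [h] at hβ; simp at hβ; linarith
      have hcρ₀ : c ≠ ρ₀ := by rintro rfl; exact hgc hgρ₀
      have hdistcρ : ‖c - ρ₀‖ ≤ R₁ := by
        rw [← dist_eq_norm, dist_comm]; exact mem_closedBall.mp hρ₀c
      have hcρpos : (0:ℝ) < ‖c - ρ₀‖ := by
        rw [norm_pos_iff, sub_ne_zero]; exact hcρ₀
      have hval : ‖g c‖ = ‖c - ρ₀‖ * ‖h₀ c‖ := by rw [hfac c, norm_mul]
      have hβ' : β / R₁ < ‖h₀ c‖ := by
        rw [div_lt_iff₀ hR0]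
        calc β < ‖g c‖ := hβ
        _ = ‖c - ρ₀‖ * ‖h₀ c‖ := hval
        _ ≤ R₁ * ‖h₀ c‖ := by
            apply mul_le_mul_of_nonneg_right hdistcρ (norm_nonneg _)
        _ = ‖h₀ c‖ * R₁ := mul_comm _ _
      have hsph' : ∀ z ∈ sphere c (3 * R₁), ‖h₀ z‖ ≤ 2 ^ n * (β / R₁) := by
        intro z hz
        have hzρ : 2 * R₁ ≤ ‖z - ρ₀‖ := by
          have h1 : dist z c = 3 * R₁ := mem_sphere.mp hz
          have h2 : dist c ρ₀ ≤ R₁ := mem_closedBall'.mp hρ₀c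
          have := dist_triangle z ρ₀ c
          rw [← dist_eq_norm]
          have h3 : dist ρ₀ c ≤ R₁ := dist_comm c ρ₀ ▸ h2
          nlinarith [dist_triangle z c ρ₀, dist_comm ρ₀ c,
            (by linarith [dist_triangle z ρ₀ c, h3] : dist z c - dist ρ₀ c ≤ dist z ρ₀)]
        have hgz := hsph z hz
        have hzρpos : (0:ℝ) < ‖z - ρ₀‖ := by linarith
        have : ‖z - ρ₀‖ * ‖h₀ z‖ ≤ 2 ^ (n+1) * β := by rw [← norm_mul, ← hfac z]; exact hgz
        have h2R : 2 * R₁ * ‖h₀ z‖ ≤ 2 ^ (n+1) * β := by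
          nlinarith [norm_nonneg (h₀ z)]
        rw [pow_succ] at h2R
        have := mul_le_mul_of_nonneg_right h2R (le_of_lt (inv_pos.mpr hR0))
        calc ‖h₀ z‖ = 2 * R₁ * ‖h₀ z‖ * (2 * R₁)⁻¹ := by field_simp
        _ ≤ 2 ^ n * 2 * β * (2 * R₁)⁻¹ := by
            apply mul_le_mul_of_nonneg_right h2R
            positivity
        _ = 2 ^ n * (β / R₁) := by field_simp
      obtain ⟨Z', h, hdh, hcard, hmem, hnz, hprod⟩ :=
        ih h₀ (β / R₁) hd₀ (by positivity) hβ' hsph'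
      refine ⟨ρ₀ ::ₘ Z', h, hdh, ?_, ?_, hnz, ?_⟩
      · simpa using Nat.succ_le_succ hcard
      · intro ρ hρ
        rcases Multiset.mem_cons.mp hρ with rfl | hρ'
        · exact ⟨hρ₀c, hgρ₀⟩
        · refine ⟨(hmem ρ hρ').1, ?_⟩
          rw [hfac ρ, (hmem ρ hρ').2, mul_zero]
      · intro z
        rw [hfac z, hprod z, Multiset.map_cons, Multiset.prod_cons]
        ring
    · push_neg at hex
      exact ⟨0, g, hg, Nat.zero_le _, by simp, hex, by simp⟩

/-- Existence of a holomorphic logarithm of a nonvanishing entire function on a ball. -/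
lemma DPaux.exists_log (c : ℂ) (R : ℝ) (hR : 0 < R) (h : ℂ → ℂ)
    (hd : Differentiable ℂ h) (hnz : ∀ z ∈ ball c R, h z ≠ 0) :
    ∃ L : ℂ → ℂ, (∀ w ∈ ball c R, DifferentiableAt ℂ L w) ∧
      (∀ z ∈ ball c R, Complex.exp (L z) = h z) := by
  have hderiv : Continuous (deriv h) := (hd.contDiff (n := 1)).continuous_deriv le_rfl
  set q : ℂ → ℂ := fun w => deriv h w / h w with hq
  have hqc : ∀ w ∈ ball c R, ContinuousAt q w := fun w hw =>
    hderiv.continuousAt.div hd.continuous.continuousAt (hnz w hw)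
  set E : ℂ → ℂ := fun z => ∫ u in (0:ℝ)..1, q (c + u • (z - c)) with hE
  set L : ℂ → ℂ := fun z => Complex.log (h c) + (z - c) * E z with hLdef
  have hγnorm : ∀ (z : ℂ) (u : ℝ), ‖c + u • (z - c) - c‖ = |u| * ‖z - c‖ := by
    intro z u
    rw [add_sub_cancel_left, norm_smul, Real.norm_eq_abs]
  -- the key identity exp (L z) = h z
  have key : ∀ z ∈ ball c R, Complex.exp (L z) = h z := by
    intro z hz
    have hznorm : ‖z - c‖ < R := by rw [← dist_eq_norm]; exact mem_ball.mp hz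
    set γ : ℝ → ℂ := fun u => c + u • (z - c) with hγ
    set f : ℝ → ℂ := fun u => q (γ u) with hf
    set U : Set ℝ := {u : ℝ | |u| * ‖z - c‖ < R} with hU
    have hUopen : IsOpen U :=
      isOpen_lt (continuous_abs.mul continuous_const) continuous_const
    have hsub : Icc (0:ℝ) 1 ⊆ U := by
      intro u hu
      have : |u| ≤ 1 := by rw [abs_le]; constructor <;> [linarith [hu.1]; exact hu.2]
      calc |u| * ‖z - c‖ ≤ 1 * ‖z - c‖ :=
            mul_le_mul_of_nonneg_right this (norm_nonneg _)
        _ < R := by rwa [one_mul]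
    have hγmem : ∀ u ∈ U, γ u ∈ ball c R := by
      intro u hu
      rw [mem_ball, dist_eq_norm, hγnorm]
      exact hu
    have hγcont : Continuous γ := continuous_const.add (continuous_id.smul continuous_const)
    have hfca : ∀ u ∈ U, ContinuousAt f u := fun u hu =>
      (hqc _ (hγmem u hu)).comp hγcont.continuousAt
    set F : ℝ → ℂ := fun s => ∫ u in (0:ℝ)..s, f u with hF
    have hFd : ∀ s ∈ Icc (0:ℝ) 1, HasDerivAt F (f s) s := by
      intro s hs
      have hIccsub : uIcc (0:ℝ) s ⊆ Icc 0 1 := by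
        rw [uIcc_of_le hs.1]; exact Icc_subset_Icc le_rfl hs.2
      refine intervalIntegral.integral_hasDerivAt_right ?_ ?_ (hfca s (hsub hs))
      · apply ContinuousOn.intervalIntegrable
        exact fun u hu => (hfca u (hsub (hIccsub hu))).continuousWithinAt
      · exact ContinuousOn.stronglyMeasurableAtFilter hUopen
          (fun u hu => (hfca u hu).continuousWithinAt) s (hsub hs)
    set G : ℝ → ℂ := fun s => h (γ s) * Complex.exp (-((z - c) * F s)) with hG
    have hGd : ∀ s ∈ Icc (0:ℝ) 1, HasDerivWithinAt G 0 (Icc 0 1) s := by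
      intro s hs
      have hγd : HasDerivAt γ (z - c) s := by
        exact (((hasDerivAt_id s).smul_const (z - c)).const_add c).congr_deriv (one_smul _ _)
      have hcomp : HasDerivAt (fun u => h (γ u)) ((z - c) * deriv h (γ s)) s := by
        have h1 := HasFDerivAt.comp_hasDerivAt s
          (((hd (γ s)).hasDerivAt.hasFDerivAt).restrictScalars ℝ) hγd
        rw [show (fun u => h (γ u)) = h ∘ γ from rfl]
        simpa [smul_eq_mul, mul_comm] using h1
      have hFd' : HasDerivAt (fun u => -((z - c) * F u)) (-((z - c) * f s)) s :=
        ((hFd s hs).const_mul (z - c)).neg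
      have hexp := hFd'.cexp
      have hmul := hcomp.mul hexp
      have hzero : (z - c) * deriv h (γ s) * Complex.exp (-((z - c) * F s)) +
          h (γ s) * (Complex.exp (-((z - c) * F s)) * -((z - c) * f s)) = 0 := by
        have hne : h (γ s) ≠ 0 := hnz _ (hγmem s (hsub hs))
        simp only [hf, hq]
        field_simp
        ring
      rw [hzero] at hmul
      exact hmul.hasDerivWithinAt
    have hMVT := Convex.norm_image_sub_le_of_norm_hasDerivWithin_le
      (f' := fun _ : ℝ => (0:ℂ)) (C := 0) hGd (fun x _ => by simp) (convex_Icc 0 1)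
      (⟨le_refl 0, zero_le_one⟩ : (0:ℝ) ∈ Icc (0:ℝ) 1)
      (⟨zero_le_one, le_refl 1⟩ : (1:ℝ) ∈ Icc (0:ℝ) 1)
    rw [zero_mul] at hMVT
    have hG10 : G 1 = G 0 := by
      have := norm_sub_eq_zero_iff.mp (le_antisymm hMVT (norm_nonneg _))
      exact this
    have hγ0 : γ 0 = c := by simp [hγ]
    have hγ1 : γ 1 = z := by simp [hγ]
    have hF0 : F 0 = 0 := intervalIntegral.integral_same
    have hF1 : F 1 = E z := rfl
    have hzeq : h z * Complex.exp (-((z - c) * E z)) = h c := by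
      have := hG10
      simp only [hG, hγ0, hγ1, hF0, hF1] at this
      simpa using this
    have hhc : h c ≠ 0 := hnz c (mem_ball_self hR)
    rw [hLdef]
    simp only
    rw [Complex.exp_add, Complex.exp_log hhc, ← hzeq, mul_assoc, ← Complex.exp_add]
    simp
  -- continuity of E inside the ball
  have hEcont : ∀ w ∈ ball c R, ContinuousAt E w := by
    intro w hw
    have hwc : ‖w - c‖ < R := by rw [← dist_eq_norm]; exact mem_ball.mp hw
    set r' : ℝ := (‖w - c‖ + R) / 2 with hr'
    have hr'R : r' < R := by rw [hr']; linarith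
    have hr'pos : 0 < r' := by positivity
    have hwr' : ‖w - c‖ < r' := by rw [hr']; linarith
    have hqK : ContinuousOn q (closedBall c r') := by
      intro x hx
      refine (hqc x ?_).continuousWithinAt
      rw [mem_ball]
      exact lt_of_le_of_lt (mem_closedBall.mp hx) hr'R
    have hUC : UniformContinuousOn q (closedBall c r') :=
      (isCompact_closedBall c r').uniformContinuousOn_of_continuous hqK
    rw [Metric.continuousAt_iff]
    intro ε hε
    rw [Metric.uniformContinuousOn_iff] at hUC
    obtain ⟨δ₁, hδ₁, hUC'⟩ := hUC (ε / 2) (by linarith)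
    refine ⟨min δ₁ ((R - ‖w - c‖) / 2), lt_min hδ₁ (by linarith), ?_⟩
    intro z hzw
    have hzw1 : dist z w < δ₁ := lt_of_lt_of_le hzw (min_le_left _ _)
    have hzw2 : dist z w < (R - ‖w - c‖) / 2 := lt_of_lt_of_le hzw (min_le_right _ _)
    have hzc : ‖z - c‖ ≤ r' := by
      have := norm_sub_le_norm_sub_add_norm_sub z w c
      rw [dist_eq_norm] at hzw2
      rw [hr']; linarith
    have hmemK : ∀ (y : ℂ), ‖y - c‖ ≤ r' → ∀ u ∈ Set.uIoc (0:ℝ) 1,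
        c + u • (y - c) ∈ closedBall c r' := by
      intro y hy u hu
      rw [mem_closedBall, dist_eq_norm, hγnorm]
      have hu' : |u| ≤ 1 := by
        rw [Set.uIoc_of_le zero_le_one] at hu
        rw [abs_le]; exact ⟨by linarith [hu.1], hu.2⟩
      calc |u| * ‖y - c‖ ≤ 1 * r' :=
        mul_le_mul hu' hy (norm_nonneg _) zero_le_one
      _ = r' := one_mul _
    have hmaps : ∀ (y : ℂ), ‖y - c‖ ≤ r' →
        MapsTo (fun u : ℝ => c + u • (y - c)) (uIcc (0:ℝ) 1) (closedBall c r') := by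
      intro y hy u hu
      rw [Set.uIcc_of_le zero_le_one] at hu
      have hu' : |u| ≤ 1 := by rw [abs_le]; exact ⟨by linarith [hu.1], hu.2⟩
      rw [mem_closedBall, dist_eq_norm, hγnorm]
      calc |u| * ‖y - c‖ ≤ 1 * r' := mul_le_mul hu' hy (norm_nonneg _) zero_le_one
      _ = r' := one_mul _
    have hint : ∀ (y : ℂ), ‖y - c‖ ≤ r' →
        IntervalIntegrable (fun u : ℝ => q (c + u • (y - c))) MeasureTheory.volume 0 1 := by
      intro y hy
      apply ContinuousOn.intervalIntegrable
      exact hqK.comp ((continuous_const.add (continuous_id.smul continuous_const)).continuousOn)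
        (hmaps y hy)
    rw [dist_eq_norm]
    have hEsub : E z - E w
        = ∫ u in (0:ℝ)..1, (q (c + u • (z - c)) - q (c + u • (w - c))) :=
      (intervalIntegral.integral_sub (hint z hzc) (hint w hwr'.le)).symm
    have hbound : ∀ u ∈ Set.uIoc (0:ℝ) 1,
        ‖q (c + u • (z - c)) - q (c + u • (w - c))‖ ≤ ε / 2 := by
      intro u hu
      have h1 := hmemK z hzc u hu
      have h2 := hmemK w hwr'.le u hu
      have hu' : |u| ≤ 1 := by
        rw [Set.uIoc_of_le zero_le_one] at hu
        rw [abs_le]; exact ⟨by linarith [hu.1], hu.2⟩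
      have hdd : dist (c + u • (z - c)) (c + u • (w - c)) < δ₁ := by
        rw [dist_eq_norm]
        have heq2 : (c + u • (z - c)) - (c + u • (w - c)) = u • (z - w) := by
          module
        rw [heq2, norm_smul, Real.norm_eq_abs]
        rw [dist_eq_norm] at hzw1
        calc |u| * ‖z - w‖ ≤ 1 * ‖z - w‖ :=
              mul_le_mul_of_nonneg_right hu' (norm_nonneg _)
        _ = ‖z - w‖ := one_mul _
        _ < δ₁ := hzw1
      have := hUC' _ h1 _ h2 hdd
      rw [dist_eq_norm] at this
      linarith
    calc ‖E z - E w‖ ≤ ε / 2 * |1 - 0| := by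
          rw [hEsub]
          exact intervalIntegral.norm_integral_le_of_norm_le_const hbound
    _ = ε / 2 := by norm_num
    _ < ε := by linarith
  -- differentiability of L inside the ball
  have hLdiff : ∀ w ∈ ball c R, DifferentiableAt ℂ L w := by
    intro w hw
    have hwne : h w ≠ 0 := hnz w hw
    have hLcont : ContinuousAt L w := by
      apply ContinuousAt.add continuousAt_const
      exact ((continuous_id.sub continuous_const).continuousAt).mul (hEcont w hw)
    set Lt : ℂ → ℂ := fun z => L w + Complex.log (h z / h w) with hLt
    have hLtd : DifferentiableAt ℂ Lt w := by
      apply DifferentiableAt.add (differentiableAt_const _)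
      apply DifferentiableAt.clog
      · exact (hd w).div_const _
      · rw [div_self hwne]; exact Complex.one_mem_slitPlane
    have hLtcont : ContinuousAt Lt w := hLtd.continuousAt
    have hδ0 : L w - Lt w = 0 := by
      rw [hLt]; simp only [div_self hwne, Complex.log_one, add_zero, sub_self]
    have hev : ∀ᶠ z in nhds w, L z = Lt z := by
      have hball : ∀ᶠ z in nhds w, z ∈ ball c R := isOpen_ball.mem_nhds hw
      have hcont : ContinuousAt (fun z => L z - Lt z) w := hLcont.sub hLtcont
      have hsmall : ∀ᶠ z in nhds w, ‖L z - Lt z‖ < 1 := by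
        have h1 : Filter.Tendsto (fun z => L z - Lt z) (nhds w) (nhds 0) := by
          rw [← hδ0]; exact hcont.tendsto
        have := h1 (Metric.ball_mem_nhds 0 one_pos)
        filter_upwards [this] with z hz
        rw [Set.mem_preimage, mem_ball, dist_eq_norm, sub_zero] at hz
        exact hz
      filter_upwards [hball, hsmall] with z hzball hzsmall
      have hzne : h z ≠ 0 := hnz z hzball
      have hexpLt : Complex.exp (Lt z) = h z := by
        rw [hLt]
        simp only
        rw [Complex.exp_add, Complex.exp_log (div_ne_zero hzne hwne), key w hw]
        field_simp
      have hexp1 : Complex.exp (L z - Lt z) = 1 := by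
        rw [Complex.exp_sub, key z hzball, hexpLt, div_self hzne]
      obtain ⟨k, hk⟩ := Complex.exp_eq_one_iff.mp hexp1
      have hknorm : ‖L z - Lt z‖ = |(k:ℝ)| * (2 * Real.pi) := by
        rw [hk]
        simp [norm_mul, Complex.norm_I, Complex.norm_real, Real.norm_eq_abs,
          abs_of_nonneg Real.pi_nonneg, Complex.norm_intCast, Complex.norm_ofNat]
      have hk0 : k = 0 := by
        by_contra hkne
        have : (1:ℝ) ≤ |(k:ℝ)| := by
          rw [← Int.cast_abs]
          exact_mod_cast Int.one_le_abs (by exact_mod_cast hkne)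
        have hpi : (3:ℝ) < Real.pi := Real.pi_gt_three
        rw [hknorm] at hzsmall
        nlinarith
      rw [hk0] at hk
      simp only [Int.cast_zero, zero_mul] at hk
      exact sub_eq_zero.mp hk
    exact hLtd.congr_of_eventuallyEq hev
  exact ⟨L, hLdiff, key⟩

/-- Borel–Carathéodory style two-point ratio bound for a nonvanishing function on a ball. -/
lemma DPaux.ratio_bound (c : ℂ) (R₁ : ℝ) (hR : 1 ≤ R₁) (h : ℂ → ℂ)
    (hd : Differentiable ℂ h) (hnz : ∀ z ∈ ball c R₁, h z ≠ 0)
    (Hi Lo : ℝ) (hLo : 0 < Lo) (hLoc : Lo ≤ ‖h c‖)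
    (hHi : ∀ z ∈ ball c R₁, ‖h z‖ ≤ Hi) :
    ∀ z₁ ∈ closedBall c (R₁ - 1), ∀ z₂ ∈ closedBall c (R₁ - 1),
      ‖h z₁‖ ≤ Real.exp (4 * (Real.log Hi - Real.log Lo + 1) * R₁) * ‖h z₂‖ := by
  have hR0 : (0:ℝ) < R₁ := lt_of_lt_of_le one_pos hR
  obtain ⟨L, hLd, hLe⟩ := DPaux.exists_log c R₁ hR0 h hd hnz
  have hcball : c ∈ ball c R₁ := mem_ball_self hR0
  have hHic : ‖h c‖ ≤ Hi := hHi c hcball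
  have hHipos : 0 < Hi := lt_of_lt_of_le hLo (hLoc.trans hHic)
  set B : ℝ := Real.log Hi - Real.log Lo + 1 with hB
  have hB1 : 1 ≤ B := by
    have := Real.log_le_log hLo (hLoc.trans hHic)
    rw [hB]; linarith
  have hB0 : 0 < B := lt_of_lt_of_le one_pos hB1
  have hre : ∀ z ∈ ball c R₁, (L z).re = Real.log ‖h z‖ := by
    intro z hz
    have : ‖h z‖ = Real.exp (L z).re := by
      rw [← hLe z hz, Complex.norm_exp]
    rw [this, Real.log_exp]
  have hsmall : ∀ z ∈ ball c R₁, (L z).re - (L c).re ≤ B - 1 := by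
    intro z hz
    have h1 : Real.log ‖h z‖ ≤ Real.log Hi :=
      Real.log_le_log (norm_pos_iff.mpr (hnz z hz)) (hHi z hz)
    have h2 : Real.log Lo ≤ Real.log ‖h c‖ :=
      Real.log_le_log hLo hLoc
    rw [hre z hz, hre c hcball, hB]
    linarith
  set F : ℂ → ℂ := fun z => L z - L c with hF
  have hden : ∀ z ∈ ball c R₁, ((2 * B : ℝ) : ℂ) - F z ≠ 0 := by
    intro z hz hcontra
    have h0 : (((2 * B : ℝ) : ℂ) - F z).re = 0 := by rw [hcontra]; rfl
    have hFre : (F z).re = (L z).re - (L c).re := by simp [hF, Complex.sub_re]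
    have h2 := hsmall z hz
    rw [Complex.sub_re, Complex.ofReal_re, hFre] at h0
    linarith
  set φ : ℂ → ℂ := fun z => F z / (((2 * B : ℝ) : ℂ) - F z) with hφ
  have hφc : φ c = 0 := by
    have : F c = 0 := by simp [hF]
    simp [hφ, this]
  have hφd : DifferentiableOn ℂ φ (ball c R₁) := by
    intro z hz
    refine DifferentiableAt.differentiableWithinAt ?_
    exact ((hLd z hz).sub_const (L c)).div
      ((differentiableAt_const _).sub ((hLd z hz).sub_const (L c))) (hden z hz)
  have hφnorm : ∀ z ∈ ball c R₁, ‖φ z‖ < 1 := by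
    intro z hz
    have hd0 : ‖((2 * B : ℝ) : ℂ) - F z‖ ≠ 0 := norm_ne_zero_iff.mpr (hden z hz)
    have hd0' : 0 < ‖((2 * B : ℝ) : ℂ) - F z‖ := (norm_nonneg _).lt_of_ne (Ne.symm hd0)
    rw [hφ]
    simp only
    rw [norm_div, div_lt_one hd0']
    have hFre : (F z).re ≤ B - 1 := by
      have h1 := hsmall z hz
      simp only [hF, Complex.sub_re]
      linarith
    have hsq : ‖F z‖ ^ 2 < ‖((2 * B : ℝ) : ℂ) - F z‖ ^ 2 := by
      rw [Complex.sq_norm, Complex.sq_norm]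
      simp only [Complex.normSq_apply, Complex.sub_re, Complex.sub_im,
        Complex.ofReal_re, Complex.ofReal_im]
      nlinarith [hFre, hB0]
    exact lt_of_pow_lt_pow_left₀ 2 (norm_nonneg _) hsq
  have hmaps : MapsTo φ (ball c R₁) (ball (φ c) 1) := by
    intro z hz
    rw [hφc, mem_ball, dist_zero_right]
    exact hφnorm z hz
  -- main bound on ‖F z‖ for z in the smaller ball
  have hFbound : ∀ z ∈ closedBall c (R₁ - 1), ‖F z‖ ≤ 2 * B * R₁ := by
    intro z hz
    have hzball : z ∈ ball c R₁ := lt_of_le_of_lt (mem_closedBall.mp hz) (by linarith)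
    have hsch := Complex.dist_le_div_mul_dist_of_mapsTo_ball hφd (hmaps.mono_right ball_subset_closedBall) hzball
    rw [hφc, dist_zero_right] at hsch
    have hφz : ‖φ z‖ ≤ (R₁ - 1) / R₁ := by
      calc ‖φ z‖ ≤ 1 / R₁ * dist z c := hsch
      _ ≤ 1 / R₁ * (R₁ - 1) := by
          apply mul_le_mul_of_nonneg_left (mem_closedBall.mp hz)
          positivity
      _ = (R₁ - 1) / R₁ := by ring
    have hmul : φ z * (((2 * B : ℝ) : ℂ) - F z) = F z := div_mul_cancel₀ _ (hden z hzball)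
    have hid : F z * (1 + φ z) = ((2 * B : ℝ) : ℂ) * φ z := by
      have hexp : ((2 * B : ℝ) : ℂ) * φ z
          = (((2 * B : ℝ) : ℂ) - F z) * φ z + F z * φ z := by ring
      rw [hexp, mul_comm (((2 * B : ℝ) : ℂ) - F z) (φ z), hmul]
      ring
    have hnormid : ‖F z‖ * ‖1 + φ z‖ = 2 * B * ‖φ z‖ := by
      rw [← norm_mul, hid, norm_mul, Complex.norm_real, Real.norm_eq_abs,
        abs_of_pos (by linarith : (0:ℝ) < 2 * B)]
    have h1φ : 1 / R₁ ≤ ‖1 + φ z‖ := by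
      have h3 : ‖(1 + φ z) - φ z‖ ≤ ‖1 + φ z‖ + ‖φ z‖ := norm_sub_le _ _
      simp only [add_sub_cancel_right, norm_one] at h3
      have h4 : (R₁ - 1) / R₁ + 1 / R₁ = 1 := by field_simp; ring
      linarith [hφz]
    have hφz1 : ‖φ z‖ ≤ 1 := by
      calc ‖φ z‖ ≤ (R₁ - 1) / R₁ := hφz
      _ ≤ 1 := by rw [div_le_one hR0]; linarith
    have s1 : ‖F z‖ * (1 / R₁) ≤ ‖F z‖ * ‖1 + φ z‖ :=
      mul_le_mul_of_nonneg_left h1φ (norm_nonneg _)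
    have s2 : 2 * B * ‖φ z‖ ≤ 2 * B * 1 :=
      mul_le_mul_of_nonneg_left hφz1 (by positivity)
    have s3 : ‖F z‖ * (1 / R₁) ≤ 2 * B := by
      rw [hnormid] at s1
      nlinarith [s1, s2, hB0, norm_nonneg (φ z)]
    calc ‖F z‖ = ‖F z‖ * (1 / R₁) * R₁ := by field_simp
    _ ≤ 2 * B * R₁ := mul_le_mul_of_nonneg_right s3 hR0.le
  -- conclude
  intro z₁ hz₁ z₂ hz₂
  have hb₁ : z₁ ∈ ball c R₁ := lt_of_le_of_lt (mem_closedBall.mp hz₁) (by linarith)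
  have hb₂ : z₂ ∈ ball c R₁ := lt_of_le_of_lt (mem_closedBall.mp hz₂) (by linarith)
  have hp₁ : 0 < ‖h z₁‖ := norm_pos_iff.mpr (hnz z₁ hb₁)
  have hp₂ : 0 < ‖h z₂‖ := norm_pos_iff.mpr (hnz z₂ hb₂)
  have hlog : Real.log ‖h z₁‖ - Real.log ‖h z₂‖ ≤ 4 * B * R₁ := by
    have e₁ : Real.log ‖h z₁‖ = (F z₁).re + (L c).re := by
      rw [hF]; simp only [Complex.sub_re]; rw [← hre z₁ hb₁]; ring
    have e₂ : Real.log ‖h z₂‖ = (F z₂).re + (L c).re := by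
      rw [hF]; simp only [Complex.sub_re]; rw [← hre z₂ hb₂]; ring
    have r₁ : (F z₁).re ≤ ‖F z₁‖ := by
      exact Complex.re_le_norm (F z₁)
    have r₂ : -(‖F z₂‖) ≤ (F z₂).re := by
      have habs := Complex.abs_re_le_norm (F z₂)
      rw [abs_le] at habs
      exact habs.1
    rw [e₁, e₂]
    linarith [hFbound z₁ hz₁, hFbound z₂ hz₂, r₁, r₂]
  calc ‖h z₁‖ = Real.exp (Real.log ‖h z₁‖) := (Real.exp_log hp₁).symm
  _ ≤ Real.exp (4 * B * R₁ + Real.log ‖h z₂‖) := by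
      apply Real.exp_le_exp.mpr; linarith
  _ = Real.exp (4 * B * R₁) * ‖h z₂‖ := by
      rw [Real.exp_add, Real.exp_log hp₂]

lemma DPaux.norm_shift_le (r ε t : ℝ) (ρ : ℂ) (hρ : ρ.re ≤ r) (hε : 0 ≤ ε) :
    ‖(r:ℂ) + (t:ℂ) * Complex.I - ρ‖ ≤ ‖(r:ℂ) + (ε:ℂ) + (t:ℂ) * Complex.I - ρ‖ := by
  rw [Complex.norm_def, Complex.norm_def]
  apply Real.sqrt_le_sqrt
  rw [Complex.normSq_apply, Complex.normSq_apply]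
  simp only [Complex.sub_re, Complex.sub_im, Complex.add_re, Complex.add_im,
    Complex.ofReal_re, Complex.ofReal_im, Complex.mul_re, Complex.mul_im,
    Complex.I_re, Complex.I_im]
  nlinarith [hρ, hε, mul_nonneg hε (by linarith : (0:ℝ) ≤ (r - ρ.re) + (r + ε - ρ.re))]

end DPauxHelpers

open Finset

section MainTheorem

open Metric Set Function

theorem dirichlet_polynomial_ratio_bounded (m : ℕ) (hm : 1 ≤ m) (a : ℕ → ℂ)
    (ha1 : a 1 ≠ 0) (r : ℝ)
    (hzeros : ∀ ρ : ℂ, (∑ k ∈ Finset.Icc 1 m, a k * (k : ℂ) ^ (-ρ)) = 0 → ρ.re ≤ r) :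
    ∃ C > (0 : ℝ), ∃ ε₀ > (0 : ℝ), ∀ t : ℝ, ∀ ε : ℝ, 0 < ε → ε ≤ ε₀ →
      ‖∑ k ∈ Finset.Icc 1 m, a k * (k : ℂ) ^ (-((r : ℂ) + t * Complex.I))‖ ≤
        C * ‖∑ k ∈ Finset.Icc 1 m, a k * (k : ℂ) ^ (-((r : ℂ) + ε + t * Complex.I))‖ := by
  classical
  set P : ℂ → ℂ := fun z => ∑ k ∈ Finset.Icc 1 m, a k * (k : ℂ) ^ (-z) with hP
  have hP0 : ∀ z : ℂ, P z = ∑ k ∈ Finset.Icc 1 m, a k * (k : ℂ) ^ (-z) := fun z => by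
    rw [hP]
  -- basic facts about the terms
  have hk1 : ∀ k ∈ Finset.Icc 1 m, (1:ℝ) ≤ (k:ℝ) := by
    intro k hk
    have := (Finset.mem_Icc.mp hk).1
    exact_mod_cast this
  have hkne : ∀ k ∈ Finset.Icc 1 m, ((k:ℕ):ℂ) ≠ 0 := by
    intro k hk
    have h1 := (Finset.mem_Icc.mp hk).1
    exact Nat.cast_ne_zero.mpr (by omega)
  have hPdiff : Differentiable ℂ P := by
    rw [hP]
    apply Differentiable.fun_sum
    intro k hk
    exact (differentiable_const (a k)).mul
      ((differentiable_neg).const_cpow (Or.inl (hkne k hk)))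
  have hnormterm : ∀ k ∈ Finset.Icc 1 m, ∀ z : ℂ, ‖(k:ℂ) ^ (-z)‖ = (k:ℝ) ^ (-z.re) := by
    intro k hk z
    have hkpos : (0:ℝ) < (k:ℝ) := lt_of_lt_of_le one_pos (hk1 k hk)
    rw [show ((k:ℕ):ℂ) = (((k:ℕ):ℝ):ℂ) by push_cast; ring]
    rw [Complex.norm_cpow_eq_rpow_re_of_pos hkpos, Complex.neg_re]
  -- uniform upper bound on P on half-planes
  have hPbound : ∀ (σ : ℝ) (z : ℂ), σ ≤ z.re →
      ‖P z‖ ≤ ∑ k ∈ Finset.Icc 1 m, ‖a k‖ * (k:ℝ) ^ (-σ) := by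
    intro σ z hz
    calc ‖P z‖ ≤ ∑ k ∈ Finset.Icc 1 m, ‖a k * (k:ℂ) ^ (-z)‖ := norm_sum_le _ _
    _ ≤ ∑ k ∈ Finset.Icc 1 m, ‖a k‖ * (k:ℝ) ^ (-σ) := by
        apply Finset.sum_le_sum
        intro k hk
        rw [norm_mul, hnormterm k hk z]
        apply mul_le_mul_of_nonneg_left _ (norm_nonneg _)
        exact Real.rpow_le_rpow_of_exponent_le (hk1 k hk) (by linarith)
  -- choice of constants
  set S : ℝ := ∑ k ∈ Finset.Icc 1 m, ‖a k‖ with hS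
  have ha1pos : 0 < ‖a 1‖ := norm_pos_iff.mpr ha1
  have h1mem : 1 ∈ Finset.Icc 1 m := Finset.mem_Icc.mpr ⟨le_refl 1, hm⟩
  have hSa1 : ‖a 1‖ ≤ S := Finset.single_le_sum (fun k _ => norm_nonneg (a k)) h1mem
  have hSpos : 0 < S := lt_of_lt_of_le ha1pos hSa1
  set σ₁ : ℝ := max (r + 2) (max 1 (Real.logb 2 (4 * S / ‖a 1‖))) with hσ₁
  have hσ₁r : r + 2 ≤ σ₁ := le_max_left _ _
  have hσ₁1 : 1 ≤ σ₁ := le_trans (le_max_left _ _) (le_max_right _ _)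
  have hσ₁log : Real.logb 2 (4 * S / ‖a 1‖) ≤ σ₁ :=
    le_trans (le_max_right _ _) (le_max_right _ _)
  have htail : (2:ℝ) ^ (-σ₁) * S ≤ ‖a 1‖ / 4 := by
    have hX : (0:ℝ) < 4 * S / ‖a 1‖ := by positivity
    have h2σ : 4 * S / ‖a 1‖ ≤ (2:ℝ) ^ σ₁ := by
      calc 4 * S / ‖a 1‖ = (2:ℝ) ^ (Real.logb 2 (4 * S / ‖a 1‖)) :=
            (Real.rpow_logb two_pos (by norm_num) hX).symm
      _ ≤ (2:ℝ) ^ σ₁ := Real.rpow_le_rpow_of_exponent_le one_le_two hσ₁log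
    rw [Real.rpow_neg (by norm_num : (0:ℝ) ≤ 2)]
    rw [inv_mul_le_iff₀ (Real.rpow_pos_of_pos two_pos σ₁)]
    rw [div_le_iff₀ ha1pos] at h2σ
    nlinarith [h2σ, ha1pos, Real.rpow_pos_of_pos two_pos σ₁]
  set R₁ : ℝ := σ₁ - r + 1 with hR₁
  have hR₁3 : 3 ≤ R₁ := by rw [hR₁]; linarith
  have hR₁1 : 1 ≤ R₁ := by linarith
  have hR₁0 : 0 < R₁ := by linarith
  set σmin : ℝ := σ₁ - 3 * R₁ with hσmin
  set M : ℝ := ∑ k ∈ Finset.Icc 1 m, ‖a k‖ * (k:ℝ) ^ (-σmin) with hM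
  have hMpos : 0 < M := by
    rw [hM]
    apply Finset.sum_pos'
    · intro k hk
      have := hk1 k hk
      positivity
    · exact ⟨1, h1mem, by positivity⟩
  set β : ℝ := ‖a 1‖ / 2 with hβ
  have hβpos : 0 < β := by positivity
  obtain ⟨N, hN⟩ := pow_unbounded_of_one_lt (M / β) (by norm_num : (1:ℝ) < 2)
  have hMN : M ≤ 2 ^ N * β := by
    rw [div_lt_iff₀ hβpos] at hN
    linarith
  set Lo : ℝ := β / R₁ ^ N with hLo
  have hLopos : 0 < Lo := by positivity
  set C : ℝ := Real.exp (4 * (Real.log M - Real.log Lo + 1) * R₁) with hC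
  refine ⟨C, Real.exp_pos _, 1/2, by norm_num, ?_⟩
  intro t ε hε hε2
  -- geometric setup
  set c : ℂ := (σ₁ : ℂ) + (t : ℂ) * Complex.I with hc
  have hcre : c.re = σ₁ := by simp [hc]
  have hcim : c.im = t := by simp [hc]
  -- lower bound for ‖P c‖
  have hPc : β < ‖P c‖ := by
    have hsplit : P c = a 1 * (1:ℂ) ^ (-c) +
        ∑ k ∈ (Finset.Icc 1 m).erase 1, a k * (k:ℂ) ^ (-c) := by
      rw [hP0 c, ← Finset.add_sum_erase _ _ h1mem]
      norm_num
    have htailbound : ‖∑ k ∈ (Finset.Icc 1 m).erase 1, a k * (k:ℂ) ^ (-c)‖ ≤ ‖a 1‖ / 4 := by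
      calc ‖∑ k ∈ (Finset.Icc 1 m).erase 1, a k * (k:ℂ) ^ (-c)‖
          ≤ ∑ k ∈ (Finset.Icc 1 m).erase 1, ‖a k * (k:ℂ) ^ (-c)‖ := norm_sum_le _ _
      _ ≤ ∑ k ∈ (Finset.Icc 1 m).erase 1, ‖a k‖ * (2:ℝ) ^ (-σ₁) := by
          apply Finset.sum_le_sum
          intro k hk
          have hkmem : k ∈ Finset.Icc 1 m := Finset.mem_of_mem_erase hk
          have hk2 : (2:ℝ) ≤ (k:ℝ) := by
            have h1 := (Finset.mem_Icc.mp hkmem).1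
            have hne1 := Finset.ne_of_mem_erase hk
            have : 2 ≤ k := by omega
            exact_mod_cast this
          rw [norm_mul, hnormterm k hkmem c, hcre]
          apply mul_le_mul_of_nonneg_left _ (norm_nonneg _)
          rw [Real.rpow_neg (by linarith : (0:ℝ) ≤ (k:ℝ)),
            Real.rpow_neg (by norm_num : (0:ℝ) ≤ 2)]
          apply inv_anti₀ (Real.rpow_pos_of_pos two_pos σ₁)
          exact Real.rpow_le_rpow (by norm_num) hk2 (by linarith)
      _ = (2:ℝ) ^ (-σ₁) * ∑ k ∈ (Finset.Icc 1 m).erase 1, ‖a k‖ := by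
          rw [Finset.mul_sum]; apply Finset.sum_congr rfl; intro k _; ring
      _ ≤ (2:ℝ) ^ (-σ₁) * S := by
          apply mul_le_mul_of_nonneg_left _ (le_of_lt (Real.rpow_pos_of_pos two_pos _))
          exact Finset.sum_le_sum_of_subset_of_nonneg (Finset.erase_subset _ _)
            (fun k _ _ => norm_nonneg _)
      _ ≤ ‖a 1‖ / 4 := htail
    have h1c : (1:ℂ) ^ (-c) = 1 := Complex.one_cpow _
    have hX : ‖a 1‖ ≤ ‖P c‖ + ‖a 1‖ / 4 := by
      have e1 : a 1 * (1:ℂ) ^ (-c)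
          = P c - ∑ k ∈ (Finset.Icc 1 m).erase 1, a k * (k:ℂ) ^ (-c) := by
        rw [hsplit]; ring
      calc ‖a 1‖ = ‖a 1 * (1:ℂ) ^ (-c)‖ := by rw [h1c, mul_one]
      _ = ‖P c - ∑ k ∈ (Finset.Icc 1 m).erase 1, a k * (k:ℂ) ^ (-c)‖ := by rw [e1]
      _ ≤ ‖P c‖ + ‖∑ k ∈ (Finset.Icc 1 m).erase 1, a k * (k:ℂ) ^ (-c)‖ := norm_sub_le _ _
      _ ≤ ‖P c‖ + ‖a 1‖ / 4 := by linarith [htailbound]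
    rw [hβ]
    linarith
  -- upper bound on the relevant region
  have hrebound : ∀ z : ℂ, σmin ≤ z.re → ‖P z‖ ≤ M := by
    intro z hz
    have := hPbound σmin z hz
    rw [← hM] at this
    exact this
  have hrefromsphere : ∀ z ∈ sphere c (3 * R₁), σmin ≤ z.re := by
    intro z hz
    have h1 : dist z c = 3 * R₁ := mem_sphere.mp hz
    have h2 : |(z - c).re| ≤ ‖z - c‖ := by
      exact Complex.abs_re_le_norm _
    rw [dist_eq_norm] at h1
    rw [Complex.sub_re, hcre, h1] at h2
    have h3 := (abs_le.mp h2).1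
    rw [hσmin]; linarith
  have hsphere : ∀ z ∈ sphere c (3 * R₁), ‖P z‖ ≤ 2 ^ N * β := by
    intro z hz
    exact le_trans (hrebound z (hrefromsphere z hz)) hMN
  -- factorization
  obtain ⟨Z, h, hhdiff, hcard, hmemZ, hhnz, hfac⟩ :=
    DPaux.factor_zeros c R₁ hR₁1 N P β hPdiff hβpos.le hPc hsphere
  have hPfacnorm : ∀ z : ℂ, ‖P z‖ = (Z.map (fun ρ => ‖z - ρ‖)).prod * ‖h z‖ := by
    intro z
    rw [hfac z, norm_mul, DPaux.norm_msprod]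
  -- Hi bound
  have hHisphere : ∀ z ∈ sphere c (3 * R₁), ‖h z‖ ≤ M := by
    intro z hz
    have hprod1 : (1:ℝ) ≤ (Z.map (fun ρ => ‖z - ρ‖)).prod := by
      apply DPaux.one_le_msprod
      intro ρ hρ
      have hρc : dist ρ c ≤ R₁ := mem_closedBall.mp (hmemZ ρ hρ).1
      have h1 : dist z c = 3 * R₁ := mem_sphere.mp hz
      have h3 : dist z c ≤ dist z ρ + dist ρ c := dist_triangle z ρ c
      rw [← dist_eq_norm]
      linarith
    have hPzM := hrebound z (hrefromsphere z hz)
    have step : ‖h z‖ ≤ (Z.map (fun ρ => ‖z - ρ‖)).prod * ‖h z‖ :=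
      le_mul_of_one_le_left (norm_nonneg _) hprod1
    exact le_trans (step.trans_eq (hPfacnorm z).symm) hPzM
  have hHi : ∀ z ∈ ball c R₁, ‖h z‖ ≤ M := by
    intro z hz
    exact DPaux.maxmod hhdiff c (by linarith : (0:ℝ) < 3 * R₁) hHisphere z
      (mem_closedBall.mpr (le_trans (le_of_lt (mem_ball.mp hz)) (by linarith)))
  -- Lo bound
  have hLoc : Lo ≤ ‖h c‖ := by
    have hprodle : (Z.map (fun ρ => ‖c - ρ‖)).prod ≤ R₁ ^ N := by
      have h1 := DPaux.msprod_le_pow Z (fun ρ => ‖c - ρ‖) R₁ hR₁0.le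
        (fun ρ _ => norm_nonneg _) (fun ρ hρ => by
          show ‖c - ρ‖ ≤ R₁
          rw [← dist_eq_norm, dist_comm]
          exact mem_closedBall.mp (hmemZ ρ hρ).1)
      exact le_trans h1 (pow_le_pow_right₀ hR₁1 hcard)
    have hRN : (0:ℝ) < R₁ ^ N := pow_pos hR₁0 N
    rw [hLo, div_le_iff₀ hRN]
    have hPceq := hPfacnorm c
    have h2 : (Z.map (fun ρ => ‖c - ρ‖)).prod * ‖h c‖ ≤ R₁ ^ N * ‖h c‖ :=
      mul_le_mul_of_nonneg_right hprodle (norm_nonneg _)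
    have hPc' := hPc
    rw [hPceq] at hPc'
    linarith
  -- apply the ratio bound
  have hkey := DPaux.ratio_bound c R₁ hR₁1 h hhdiff
    (fun z hz => hhnz z (mem_closedBall.mpr (le_of_lt (mem_ball.mp hz))))
    M Lo hLopos hLoc hHi
  have hz₀mem : (r:ℂ) + (t:ℂ) * Complex.I ∈ closedBall c (R₁ - 1) := by
    rw [mem_closedBall, dist_eq_norm]
    have e : (r:ℂ) + (t:ℂ) * Complex.I - c = ((r - σ₁ : ℝ) : ℂ) := by
      rw [hc]; push_cast; ring
    rw [e, Complex.norm_real, Real.norm_eq_abs, abs_of_nonpos (by linarith)]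
    rw [hR₁]; linarith
  have hzεmem : (r:ℂ) + (ε:ℂ) + (t:ℂ) * Complex.I ∈ closedBall c (R₁ - 1) := by
    rw [mem_closedBall, dist_eq_norm]
    have e : (r:ℂ) + (ε:ℂ) + (t:ℂ) * Complex.I - c = ((r + ε - σ₁ : ℝ) : ℂ) := by
      rw [hc]; push_cast; ring
    rw [e, Complex.norm_real, Real.norm_eq_abs, abs_of_nonpos (by linarith)]
    rw [hR₁]; linarith
  have hcomp := hkey _ hz₀mem _ hzεmem
  -- compare the products over zeros
  have hprodmono : (Z.map (fun ρ => ‖(r:ℂ) + (t:ℂ) * Complex.I - ρ‖)).prod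
      ≤ (Z.map (fun ρ => ‖(r:ℂ) + (ε:ℂ) + (t:ℂ) * Complex.I - ρ‖)).prod := by
    apply DPaux.msprod_mono _ _ _ (fun ρ _ => norm_nonneg _)
    intro ρ hρ
    have hρre : ρ.re ≤ r := by
      have hPρ := (hmemZ ρ hρ).2
      rw [hP0 ρ] at hPρ
      exact hzeros ρ hPρ
    exact DPaux.norm_shift_le r ε t ρ hρre hε.le
  -- final computation
  rw [← hP0 ((r:ℂ) + (t:ℂ) * Complex.I), ← hP0 ((r:ℂ) + (ε:ℂ) + (t:ℂ) * Complex.I),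
    hPfacnorm ((r:ℂ) + (t:ℂ) * Complex.I), hPfacnorm ((r:ℂ) + (ε:ℂ) + (t:ℂ) * Complex.I)]
  calc (Z.map (fun ρ => ‖(r:ℂ) + (t:ℂ) * Complex.I - ρ‖)).prod
        * ‖h ((r:ℂ) + (t:ℂ) * Complex.I)‖
      ≤ (Z.map (fun ρ => ‖(r:ℂ) + (ε:ℂ) + (t:ℂ) * Complex.I - ρ‖)).prod
        * (C * ‖h ((r:ℂ) + (ε:ℂ) + (t:ℂ) * Complex.I)‖) := by
        apply mul_le_mul hprodmono hcomp (norm_nonneg _)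
        exact DPaux.msprod_nonneg _ _ (fun ρ _ => norm_nonneg _)
  _ = C * ((Z.map (fun ρ => ‖(r:ℂ) + (ε:ℂ) + (t:ℂ) * Complex.I - ρ‖)).prod
        * ‖h ((r:ℂ) + (ε:ℂ) + (t:ℂ) * Complex.I)‖) := by ring

end MainTheorem
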